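/- Let θ > 0, ρ_θ = 1 − e^{−θ}, λ ∈ (0,1], λ₁ ∈ [λ,1], B > 0, 0 ≤ b ≤ B, and 0 < w ≤ B. Define z† = λ₁ ρ_θ e^{θ(1−b/B)}/(e^θ − 1) and α = (e^{θ(1−b/B)} − 1)/(e^θ − 1). Then (1/(λρ_θ))·w·(1 − z†) ≥ w·(1 − α). -/

import Mathlib

/-- Non-emptiness of the LOBM competitive solution space, first constraint: for
`θ > 0`, `ρ_θ = 1 − e^{−θ}`, `λ ∈ (0,1]`, `λ₁ ∈ [λ,1]`, `B > 0`, `0 ≤ b ≤ B`,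
`0 < w ≤ B`, the candidate `z† = λ₁ ρ_θ e^{θ(1−b/B)}/(e^θ − 1)` satisfies
`(1/(λρ_θ)) w (1 − z†) ≥ w (1 − α)` where
`α = (e^{θ(1−b/B)} − 1)/(e^θ − 1)`. -/
theorem lobm_first_constraint_feasible
    (θ lam lam₁ B b w : ℝ)
    (hθ : 0 < θ) (hlam0 : 0 < lam) (hlam1 : lam ≤ 1)
    (hlam₁l : lam ≤ lam₁) (hlam₁u : lam₁ ≤ 1)
    (hB : 0 < B) (hb0 : 0 ≤ b) (hbB : b ≤ B) (hw0 : 0 < w) (hwB : w ≤ B) :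
    let ρ : ℝ := 1 - Real.exp (-θ)
    let z : ℝ := lam₁ * ρ * Real.exp (θ * (1 - b / B)) / (Real.exp θ - 1)
    let α : ℝ := (Real.exp (θ * (1 - b / B)) - 1) / (Real.exp θ - 1)
    w * (1 - α) ≤ (1 / (lam * ρ)) * w * (1 - z) := by
  intro ρ z α
  set E := Real.exp θ with hEdef
  set F := Real.exp (θ * (1 - b / B)) with hFdef
  have hE1 : 1 < E := by have := Real.add_one_le_exp θ; linarith
  have hF1 : 1 ≤ F := Real.one_le_exp (by
    have : 0 ≤ 1 - b / B := by
      have : b / B ≤ 1 := (div_le_one hB).mpr hbB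
      linarith
    positivity)
  have hFE : F ≤ E := Real.exp_le_exp.mpr (by
    have hb : 0 ≤ b / B := div_nonneg hb0 hB.le
    nlinarith)
  have hρ : ρ = (E - 1) / E := by
    simp only [ρ, Real.exp_neg, hEdef]
    field_simp
  have hE0 : 0 < E := by linarith
  have hE1' : (0:ℝ) < E - 1 := by linarith
  have hρ0 : 0 < ρ := by rw [hρ]; positivity
  have key : E * (1 - lam) ≥ F * (lam₁ - lam) := by nlinarith
  simp only [z, α, hρ]
  simp only [← hEdef, ← hFdef]
  field_simp
  nlinarith [mul_nonneg (by positivity : (0:ℝ) ≤ w * E * ((E-1)*(E-1)))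
    (sub_nonneg.mpr key)]
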